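/- If f : F_2^n → {-1,1} satisfies ‖f‖_{U3} ≥ ε, then E_{x,y} Σ_{α,β} f̂_x^2(α) f̂_y^2(β) f̂_{x+y}^2(α+β) ≥ ε', where ε' can be taken as ε^{24} (an absolute power of ε). -/

import Mathlib

open Finset

/-- The character `(-1)^{⟨α,x⟩}` on `F_2^n`. -/
noncomputable def chi {n : ℕ} (α x : Fin n → ZMod 2) : ℝ :=
  (-1 : ℝ) ^ ((∑ i, α i * x i : ZMod 2)).val

/-- Fourier coefficient `f̂(α) = E_x f(x)(-1)^{⟨α,x⟩}`. -/
noncomputable def fCoeff {n : ℕ} (f : (Fin n → ZMod 2) → ℝ) (α : Fin n → ZMod 2) : ℝ :=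
  (∑ x, f x * chi α x) / 2 ^ n

/-- Discrete derivative `f_y(x) = f(x) f(x+y)`. -/
noncomputable def dderiv {n : ℕ} (f : (Fin n → ZMod 2) → ℝ) (y : Fin n → ZMod 2) :
    (Fin n → ZMod 2) → ℝ := fun x => f x * f (x + y)

/-- `‖f‖_{U_d}^{2^d} = E_{x,y_1,…,y_d} ∏_{S ⊆ [d]} f(x + Σ_{i∈S} y_i)`. -/
noncomputable def gowersPow {n : ℕ} (d : ℕ) (f : (Fin n → ZMod 2) → ℝ) : ℝ :=
  (∑ x : Fin n → ZMod 2, ∑ y : Fin d → Fin n → ZMod 2,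
      ∏ S : Finset (Fin d), f (x + ∑ i ∈ S, y i)) / ((2 : ℝ) ^ n) ^ (d + 1)

/-- The Gowers uniformity norm `‖f‖_{U_d}`. -/
noncomputable def gowersNorm {n : ℕ} (d : ℕ) (f : (Fin n → ZMod 2) → ℝ) : ℝ :=
  gowersPow d f ^ ((1 : ℝ) / 2 ^ d)

/-- If `‖f‖_{U3} ≥ ε` then
`E_{x,y} Σ_{α,β} f̂_x²(α) f̂_y²(β) f̂_{x+y}²(α+β) ≥ ε' = ε^24`. -/



def sgn (c : ZMod 2) : ℝ := (-1 : ℝ) ^ c.val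

lemma sgn_zero : sgn 0 = 1 := by norm_num [sgn]
lemma sgn_add (a b : ZMod 2) : sgn (a + b) = sgn a * sgn b := by
  have h : ∀ c : ZMod 2, c = 0 ∨ c = 1 := by decide
  rcases h a with ha | ha <;> rcases h b with hb | hb <;> subst ha <;> subst hb <;>
    norm_num [sgn, ZMod.val_one, ZMod.val_zero, show ZMod.val (2:ZMod 2) = 0 from rfl]

lemma sgn_sum {ι : Type*} [DecidableEq ι] (s : Finset ι) (g : ι → ZMod 2) :
    sgn (∑ i ∈ s, g i) = ∏ i ∈ s, sgn (g i) := by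
  induction s using Finset.induction with
  | empty => simp [sgn_zero]
  | insert _ _ h ih => rw [Finset.sum_insert h, Finset.prod_insert h, sgn_add, ih]

lemma chi_sgn {n : ℕ} (α x : Fin n → ZMod 2) : chi α x = sgn (∑ i, α i * x i) := rfl

lemma chi_eq {n : ℕ} (α x : Fin n → ZMod 2) : chi α x = ∏ i, sgn (α i * x i) := by
  rw [chi_sgn, sgn_sum]

lemma chi_add_right {n : ℕ} (α x y : Fin n → ZMod 2) :
    chi α (x + y) = chi α x * chi α y := by
  rw [chi_sgn, chi_sgn, chi_sgn, ← sgn_add]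
  congr 1
  rw [← Finset.sum_add_distrib]
  exact Finset.sum_congr rfl fun i _ => by simp [mul_add]

lemma chi_add_left {n : ℕ} (α β x : Fin n → ZMod 2) :
    chi (α + β) x = chi α x * chi β x := by
  rw [chi_sgn, chi_sgn, chi_sgn, ← sgn_add]
  congr 1
  rw [← Finset.sum_add_distrib]
  exact Finset.sum_congr rfl fun i _ => by simp [add_mul]

lemma sum_sgn_mul (c : ZMod 2) : ∑ a : ZMod 2, sgn (a * c) = if c = 0 then 2 else 0 := by
  have h : c = 0 ∨ c = 1 := by revert c; decide
  have huniv : (Finset.univ : Finset (ZMod 2)) = {0, 1} := by decide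
  rcases h with hc | hc <;> subst hc <;>
    rw [huniv, Finset.sum_insert (by decide), Finset.sum_singleton] <;>
    norm_num [sgn, ZMod.val_one, ZMod.val_zero]

lemma sum_chi {n : ℕ} (x : Fin n → ZMod 2) :
    ∑ α : Fin n → ZMod 2, chi α x = if x = 0 then (2:ℝ)^n else 0 := by
  have key : ∑ α : Fin n → ZMod 2, chi α x = ∏ i, ∑ a : ZMod 2, sgn (a * x i) := by
    rw [Finset.prod_univ_sum (fun _ => (Finset.univ : Finset (ZMod 2)))
      (fun i a => sgn (a * x i))]
    rw [← Fintype.piFinset_univ]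
    exact Finset.sum_congr rfl fun α _ => (chi_eq α x)
  rw [key]
  by_cases hx : x = 0
  · subst hx
    simp [sum_sgn_mul, sgn_zero]
  · obtain ⟨i, hi⟩ := Function.ne_iff.mp hx
    rw [if_neg hx]
    apply Finset.prod_eq_zero (Finset.mem_univ i)
    rw [sum_sgn_mul, if_neg (by simpa using hi)]

lemma add_self_G {n : ℕ} (x : Fin n → ZMod 2) : x + x = 0 := by
  funext i
  show x i + x i = 0
  have : ∀ c : ZMod 2, c + c = 0 := by decide
  exact this _

lemma add_eq_zero_iff_G {n : ℕ} (x y : Fin n → ZMod 2) : x + y = 0 ↔ x = y := by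
  constructor
  · intro h
    have := congrArg (· + y) h
    simpa [add_assoc, add_self_G] using this
  · rintro rfl; exact add_self_G x

lemma chi_ortho {n : ℕ} (w w' : Fin n → ZMod 2) :
    ∑ α : Fin n → ZMod 2, chi α w * chi α w' = if w = w' then (2:ℝ)^n else 0 := by
  have : ∀ α : Fin n → ZMod 2, chi α w * chi α w' = chi α (w + w') :=
    fun α => (chi_add_right α w w').symm
  simp only [this, sum_chi, add_eq_zero_iff_G]

lemma sum_mul_chi_sq {n : ℕ} (a b : (Fin n → ZMod 2) → ℝ) :
    ∑ α : Fin n → ZMod 2, (∑ w, a w * chi α w) * (∑ w, b w * chi α w)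
      = (2:ℝ)^n * ∑ w, a w * b w := by
  have step1 : ∀ α : Fin n → ZMod 2, (∑ w, a w * chi α w) * (∑ w, b w * chi α w)
      = ∑ w1, ∑ w2, a w1 * b w2 * (chi α w1 * chi α w2) := by
    intro α
    rw [Finset.sum_mul_sum]
    exact Finset.sum_congr rfl fun w1 _ => Finset.sum_congr rfl fun w2 _ => by ring
  simp only [step1]
  rw [Finset.sum_comm]
  have : ∀ w1, ∑ α : Fin n → ZMod 2, ∑ w2, a w1 * b w2 * (chi α w1 * chi α w2)
      = a w1 * b w1 * (2:ℝ)^n := by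
    intro w1
    rw [Finset.sum_comm]
    have inner : ∀ w2, ∑ α : Fin n → ZMod 2, a w1 * b w2 * (chi α w1 * chi α w2)
        = a w1 * b w2 * (if w1 = w2 then (2:ℝ)^n else 0) := by
      intro w2
      rw [← Finset.mul_sum, chi_ortho]
    simp only [inner]
    simp only [mul_ite, mul_zero]
    rw [Finset.sum_ite_eq]
    simp
  simp only [this]
  rw [← Finset.sum_mul]
  ring

lemma triple_two {n : ℕ} (a b c : (Fin n → ZMod 2) → ℝ) :
    ∑ α : Fin n → ZMod 2, ∑ β : Fin n → ZMod 2,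
        (∑ w1, a w1 * chi α w1) * (∑ w2, b w2 * chi β w2) *
        (∑ w3, c w3 * (chi α w3 * chi β w3))
      = ((2:ℝ)^n)^2 * ∑ w, a w * b w * c w := by
  rw [Finset.sum_comm]
  have hβ : ∀ β : Fin n → ZMod 2, ∑ α : Fin n → ZMod 2,
        (∑ w1, a w1 * chi α w1) * (∑ w2, b w2 * chi β w2) *
        (∑ w3, c w3 * (chi α w3 * chi β w3))
      = (2:ℝ)^n * ((∑ w2, b w2 * chi β w2) * (∑ w, (a w * c w) * chi β w)) := by
    intro β
    have key : ∀ α : Fin n → ZMod 2, (∑ w1, a w1 * chi α w1) * (∑ w2, b w2 * chi β w2) *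
        (∑ w3, c w3 * (chi α w3 * chi β w3))
        = (∑ w2, b w2 * chi β w2) *
          ((∑ w1, a w1 * chi α w1) * (∑ w3, (c w3 * chi β w3) * chi α w3)) := by
      intro α
      have h3 : (∑ w3, c w3 * (chi α w3 * chi β w3))
          = ∑ w3 : Fin n → ZMod 2, (c w3 * chi β w3) * chi α w3 :=
        Finset.sum_congr rfl fun w3 _ => by ring
      rw [h3]; ring
    simp only [key]
    rw [← Finset.mul_sum, sum_mul_chi_sq a (fun w => c w * chi β w)]
    have h4 : (∑ w, a w * (c w * chi β w)) = ∑ w, (a w * c w) * chi β w :=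
      Finset.sum_congr rfl fun w _ => by ring
    rw [h4]; ring
  simp only [hβ]
  rw [← Finset.mul_sum, sum_mul_chi_sq b (fun w => a w * c w)]
  have h5 : (∑ w, b w * (a w * c w)) = ∑ w, a w * b w * c w :=
    Finset.sum_congr rfl fun w _ => by ring
  rw [h5]; ring

lemma mul_sum_chi {n : ℕ} (a b : (Fin n → ZMod 2) → ℝ) (α : Fin n → ZMod 2) :
    (∑ w1, a w1 * chi α w1) * (∑ w2, b w2 * chi α w2)
      = ∑ w, (∑ w1, a w1 * b (w1 + w)) * chi α w := by
  rw [Finset.sum_mul_sum]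
  have step : ∀ w1 : Fin n → ZMod 2,
      ∑ w2 : Fin n → ZMod 2, a w1 * chi α w1 * (b w2 * chi α w2)
        = ∑ w : Fin n → ZMod 2, a w1 * b (w1 + w) * chi α w := by
    intro w1
    rw [← Equiv.sum_comp (Equiv.addLeft w1)
      (fun w2 => a w1 * chi α w1 * (b w2 * chi α w2))]
    refine Finset.sum_congr rfl fun w _ => ?_
    have h0 : (Equiv.addLeft w1) w = w1 + w := rfl
    rw [h0]
    have hc : chi α w1 * chi α (w1 + w) = chi α w := by
      rw [← chi_add_right]
      congr 1
      rw [← add_assoc, add_self_G, zero_add]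
    calc a w1 * chi α w1 * (b (w1 + w) * chi α (w1 + w))
        = a w1 * b (w1 + w) * (chi α w1 * chi α (w1 + w)) := by ring
      _ = a w1 * b (w1 + w) * chi α w := by rw [hc]
  simp only [step]
  rw [Finset.sum_comm]
  exact Finset.sum_congr rfl fun w _ => by rw [Finset.sum_mul]

lemma triple_one {n : ℕ} (a b c : (Fin n → ZMod 2) → ℝ) :
    ∑ α : Fin n → ZMod 2,
        (∑ w1, a w1 * chi α w1) * (∑ w2, b w2 * chi α w2) * (∑ w3, c w3 * chi α w3)
      = (2:ℝ)^n * ∑ w1 : Fin n → ZMod 2, ∑ w2 : Fin n → ZMod 2, a w1 * b w2 * c (w1 + w2) := by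
  have step : ∀ α : Fin n → ZMod 2,
      (∑ w1, a w1 * chi α w1) * (∑ w2, b w2 * chi α w2) * (∑ w3, c w3 * chi α w3)
        = (∑ w, (∑ w1, a w1 * b (w1 + w)) * chi α w) * (∑ w3, c w3 * chi α w3) := by
    intro α; rw [mul_sum_chi]
  simp only [step]
  rw [sum_mul_chi_sq (fun w => ∑ w1, a w1 * b (w1 + w)) c]
  congr 1
  have expand : ∀ w : Fin n → ZMod 2, (∑ w1, a w1 * b (w1 + w)) * c w
      = ∑ w1 : Fin n → ZMod 2, a w1 * b (w1 + w) * c w := by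
    intro w; rw [Finset.sum_mul]
  simp only [expand]
  rw [Finset.sum_comm]
  refine Finset.sum_congr rfl fun w1 _ => ?_
  rw [← Equiv.sum_comp (Equiv.addLeft w1) (fun w => a w1 * b (w1 + w) * c w)]
  refine Finset.sum_congr rfl fun w2 _ => ?_
  have h1 : (Equiv.addLeft w1) w2 = w1 + w2 := rfl
  rw [h1, ← add_assoc, add_self_G, zero_add]







noncomputable def Cfun {n : ℕ} (f : (Fin n → ZMod 2) → ℝ) (y w : Fin n → ZMod 2) : ℝ :=
  ∑ u, dderiv f y u * dderiv f y (u + w)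

lemma Cfun_symm {n : ℕ} (f : (Fin n → ZMod 2) → ℝ) (y w : Fin n → ZMod 2) :
    Cfun f y w = Cfun f w y := by
  unfold Cfun dderiv
  refine Finset.sum_congr rfl fun u _ => ?_
  rw [add_right_comm u w y]
  ring

lemma coeff_sq {n : ℕ} (g : (Fin n → ZMod 2) → ℝ) (α : Fin n → ZMod 2) :
    fCoeff g α ^ 2
      = (∑ w, (∑ u, g u * g (u + w)) * chi α w) / ((2:ℝ)^n)^2 := by
  rw [fCoeff, div_pow, pow_two, mul_sum_chi g g α]

lemma dderiv_coeff_sq {n : ℕ} (f : (Fin n → ZMod 2) → ℝ) (y α : Fin n → ZMod 2) :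
    fCoeff (dderiv f y) α ^ 2 = (∑ w, Cfun f y w * chi α w) / ((2:ℝ)^n)^2 :=
  coeff_sq (dderiv f y) α

lemma parseval_one {n : ℕ} (f : (Fin n → ZMod 2) → ℝ)
    (hf : ∀ x, f x = 1 ∨ f x = -1) (y : Fin n → ZMod 2) :
    ∑ α : Fin n → ZMod 2, fCoeff (dderiv f y) α ^ 2 = 1 := by
  have hsq : ∀ x, dderiv f y x ^ 2 = 1 := by
    intro x
    unfold dderiv
    rcases hf x with h1 | h1 <;> rcases hf (x + y) with h2 | h2 <;> rw [h1, h2] <;> norm_num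
  have : ∑ α : Fin n → ZMod 2, fCoeff (dderiv f y) α ^ 2
      = (∑ α : Fin n → ZMod 2, (∑ x, dderiv f y x * chi α x) * (∑ x, dderiv f y x * chi α x))
        / ((2:ℝ)^n)^2 := by
    rw [Finset.sum_div]
    refine Finset.sum_congr rfl fun α _ => ?_
    rw [fCoeff, div_pow, pow_two]
  rw [this, sum_mul_chi_sq]
  have h2 : ∑ w : Fin n → ZMod 2, dderiv f y w * dderiv f y w
      = (2:ℝ)^n := by
    have : ∀ w : Fin n → ZMod 2, dderiv f y w * dderiv f y w = 1 := by
      intro w; rw [← pow_two]; exact hsq w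
    rw [Finset.sum_congr rfl fun w _ => this w, Finset.sum_const, Finset.card_univ]
    simp [Fintype.card_fun]
  rw [h2]
  have hN : (0:ℝ) < (2:ℝ)^n := by positivity
  field_simp

lemma sum_pow4 {n : ℕ} (f : (Fin n → ZMod 2) → ℝ) (y : Fin n → ZMod 2) :
    ∑ α : Fin n → ZMod 2, fCoeff (dderiv f y) α ^ 4
      = (∑ w, Cfun f y w ^ 2) / ((2:ℝ)^n)^3 := by
  have : ∀ α : Fin n → ZMod 2, fCoeff (dderiv f y) α ^ 4
      = (∑ w, Cfun f y w * chi α w) * (∑ w, Cfun f y w * chi α w) / (((2:ℝ)^n)^2)^2 := by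
    intro α
    have : fCoeff (dderiv f y) α ^ 4 = (fCoeff (dderiv f y) α ^ 2) ^ 2 := by ring
    rw [this, dderiv_coeff_sq, div_pow, pow_two]
  simp only [this]
  rw [← Finset.sum_div, sum_mul_chi_sq]
  have h2 : ∑ w : Fin n → ZMod 2, Cfun f y w * Cfun f y w = ∑ w, Cfun f y w ^ 2 :=
    Finset.sum_congr rfl fun w _ => (pow_two _).symm
  rw [h2]
  have hN : (0:ℝ) < (2:ℝ)^n := by positivity
  field_simp

lemma sum_pow6 {n : ℕ} (f : (Fin n → ZMod 2) → ℝ) (y : Fin n → ZMod 2) :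
    ∑ α : Fin n → ZMod 2, fCoeff (dderiv f y) α ^ 6
      = (∑ w1 : Fin n → ZMod 2, ∑ w2 : Fin n → ZMod 2,
          Cfun f y w1 * Cfun f y w2 * Cfun f y (w1 + w2)) / ((2:ℝ)^n)^5 := by
  have : ∀ α : Fin n → ZMod 2, fCoeff (dderiv f y) α ^ 6
      = (∑ w, Cfun f y w * chi α w) * (∑ w, Cfun f y w * chi α w) *
          (∑ w, Cfun f y w * chi α w) / (((2:ℝ)^n)^2)^3 := by
    intro α
    have h6 : fCoeff (dderiv f y) α ^ 6 = (fCoeff (dderiv f y) α ^ 2) ^ 3 := by ring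
    rw [h6, dderiv_coeff_sq, div_pow]
    ring
  simp only [this]
  rw [← Finset.sum_div, triple_one]
  have hN : (0:ℝ) < (2:ℝ)^n := by positivity
  field_simp

lemma sum_pi_three {G M : Type*} [AddCommMonoid M] [Fintype G] [DecidableEq G]
    (h : G → G → G → M) :
    ∑ y : Fin 3 → G, h (y 0) (y 1) (y 2) = ∑ a : G, ∑ b : G, ∑ c : G, h a b c := by
  let e : (Fin 3 → G) ≃ G × G × G :=
    { toFun := fun y => (y 0, y 1, y 2)
      invFun := fun p => ![p.1, p.2.1, p.2.2]
      left_inv := by intro y; funext i; fin_cases i <;> rfl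
      right_inv := by intro p; rfl }
  rw [← Equiv.sum_comp e.symm (fun y : Fin 3 → G => h (y 0) (y 1) (y 2))]
  rw [Fintype.sum_prod_type]
  refine Finset.sum_congr rfl fun a _ => ?_
  rw [Fintype.sum_prod_type]
  rfl

lemma prod_subsets_three {n : ℕ} (f : (Fin n → ZMod 2) → ℝ) (x : Fin n → ZMod 2)
    (Y : Fin 3 → Fin n → ZMod 2) :
    ∏ S : Finset (Fin 3), f (x + ∑ i ∈ S, Y i)
      = f x * f (x + Y 0) * (f (x + Y 1) * f (x + Y 1 + Y 0)) *
        (f (x + Y 2) * f (x + Y 2 + Y 0) * (f (x + Y 2 + Y 1) * f (x + Y 2 + Y 1 + Y 0))) := by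
  have huniv : (Finset.univ : Finset (Finset (Fin 3)))
      = {∅, {0}, {1}, {2}, {0,1}, {0,2}, {1,2}, {0,1,2}} := by decide
  rw [huniv]
  rw [Finset.prod_insert (by decide), Finset.prod_insert (by decide),
    Finset.prod_insert (by decide), Finset.prod_insert (by decide),
    Finset.prod_insert (by decide), Finset.prod_insert (by decide),
    Finset.prod_insert (by decide), Finset.prod_singleton]
  rw [Finset.sum_empty, Finset.sum_singleton, Finset.sum_singleton, Finset.sum_singleton,
    Finset.sum_insert (by decide), Finset.sum_singleton,
    Finset.sum_insert (by decide), Finset.sum_singleton,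
    Finset.sum_insert (by decide), Finset.sum_singleton,
    Finset.sum_insert (by decide), Finset.sum_insert (by decide), Finset.sum_singleton]
  simp only [add_zero, add_comm, add_left_comm, add_assoc]
  ring

lemma sum_Cfun_sq {n : ℕ} (f : (Fin n → ZMod 2) → ℝ) :
    ∑ y : Fin n → ZMod 2, ∑ w : Fin n → ZMod 2, Cfun f y w ^ 2
      = ∑ x : Fin n → ZMod 2, ∑ Y : Fin 3 → Fin n → ZMod 2,
          ∏ S : Finset (Fin 3), f (x + ∑ i ∈ S, Y i) := by
  have rhs : ∀ x : Fin n → ZMod 2,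
      ∑ Y : Fin 3 → Fin n → ZMod 2, ∏ S : Finset (Fin 3), f (x + ∑ i ∈ S, Y i)
        = ∑ b1 : Fin n → ZMod 2, ∑ b2 : Fin n → ZMod 2, ∑ b3 : Fin n → ZMod 2,
            f x * f (x + b1) * (f (x + b2) * f (x + b2 + b1)) *
            (f (x + b3) * f (x + b3 + b1) * (f (x + b3 + b2) * f (x + b3 + b2 + b1))) := by
    intro x
    simp only [prod_subsets_three f x]
    exact sum_pi_three (fun b1 b2 b3 =>
      f x * f (x + b1) * (f (x + b2) * f (x + b2 + b1)) *
      (f (x + b3) * f (x + b3 + b1) * (f (x + b3 + b2) * f (x + b3 + b2 + b1))))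
  simp only [rhs]
  have lhs : ∀ y w : Fin n → ZMod 2, Cfun f y w ^ 2
      = ∑ u : Fin n → ZMod 2, ∑ a : Fin n → ZMod 2,
          f u * f (u + y) * (f (u + w) * f (u + w + y)) *
          (f (u + a) * f (u + a + y) * (f (u + a + w) * f (u + a + w + y))) := by
    intro y w
    rw [pow_two, Cfun, Finset.sum_mul_sum]
    refine Finset.sum_congr rfl fun u _ => ?_
    rw [← Equiv.sum_comp (Equiv.addLeft u)
      (fun v => dderiv f y u * dderiv f y (u + w) * (dderiv f y v * dderiv f y (v + w)))]
    refine Finset.sum_congr rfl fun a _ => ?_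
    have h0 : (Equiv.addLeft u) a = u + a := rfl
    rw [h0]
    unfold dderiv
    simp only [add_comm, add_left_comm, add_assoc]
  simp only [lhs]
  -- now commute sums: ∑ y ∑ w ∑ u ∑ a  =  ∑ u ∑ y ∑ w ∑ a
  have h1 : ∀ y : Fin n → ZMod 2,
      (∑ w : Fin n → ZMod 2, ∑ u : Fin n → ZMod 2, ∑ a : Fin n → ZMod 2,
          f u * f (u + y) * (f (u + w) * f (u + w + y)) *
          (f (u + a) * f (u + a + y) * (f (u + a + w) * f (u + a + w + y))))
        = ∑ u : Fin n → ZMod 2, ∑ w : Fin n → ZMod 2, ∑ a : Fin n → ZMod 2,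
          f u * f (u + y) * (f (u + w) * f (u + w + y)) *
          (f (u + a) * f (u + a + y) * (f (u + a + w) * f (u + a + w + y))) :=
    fun y => Finset.sum_comm
  simp only [h1]
  rw [Finset.sum_comm]

lemma T_eq {n : ℕ} (f : (Fin n → ZMod 2) → ℝ) :
    (∑ x : Fin n → ZMod 2, ∑ y : Fin n → ZMod 2, ∑ α : Fin n → ZMod 2, ∑ β : Fin n → ZMod 2,
        fCoeff (dderiv f x) α ^ 2 * fCoeff (dderiv f y) β ^ 2 *
          fCoeff (dderiv f (x + y)) (α + β) ^ 2)
      = (∑ x : Fin n → ZMod 2, ∑ y : Fin n → ZMod 2, ∑ w : Fin n → ZMod 2,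
          Cfun f x w * Cfun f y w * Cfun f (x + y) w) / ((2:ℝ)^n)^4 := by
  have hN : (0:ℝ) < (2:ℝ)^n := by positivity
  rw [Finset.sum_div]
  refine Finset.sum_congr rfl fun x _ => ?_
  rw [Finset.sum_div]
  refine Finset.sum_congr rfl fun y _ => ?_
  have summand : ∀ α β : Fin n → ZMod 2,
      fCoeff (dderiv f x) α ^ 2 * fCoeff (dderiv f y) β ^ 2 *
        fCoeff (dderiv f (x + y)) (α + β) ^ 2
      = (∑ w1, Cfun f x w1 * chi α w1) * (∑ w2, Cfun f y w2 * chi β w2) *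
          (∑ w3, Cfun f (x + y) w3 * (chi α w3 * chi β w3)) / (((2:ℝ)^n)^2)^3 := by
    intro α β
    rw [dderiv_coeff_sq, dderiv_coeff_sq, dderiv_coeff_sq]
    have h3 : (∑ w3, Cfun f (x+y) w3 * chi (α + β) w3)
        = ∑ w3 : Fin n → ZMod 2, Cfun f (x+y) w3 * (chi α w3 * chi β w3) :=
      Finset.sum_congr rfl fun w3 _ => by rw [chi_add_left]
    rw [h3, div_mul_div_comm, div_mul_div_comm]
    congr 1
    ring
  simp only [summand]
  simp only [← Finset.sum_div]
  rw [triple_two (Cfun f x) (Cfun f y) (Cfun f (x + y))]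
  rw [div_eq_div_iff (by positivity) (by positivity)]
  ring

lemma swap_S {n : ℕ} (f : (Fin n → ZMod 2) → ℝ) :
    ∑ x : Fin n → ZMod 2, ∑ y : Fin n → ZMod 2, ∑ w : Fin n → ZMod 2,
        Cfun f x w * Cfun f y w * Cfun f (x + y) w
      = ∑ y : Fin n → ZMod 2, ∑ w1 : Fin n → ZMod 2, ∑ w2 : Fin n → ZMod 2,
          Cfun f y w1 * Cfun f y w2 * Cfun f y (w1 + w2) := by
  have step : ∀ x y w : Fin n → ZMod 2,
      Cfun f x w * Cfun f y w * Cfun f (x + y) w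
        = Cfun f w x * Cfun f w y * Cfun f w (x + y) := by
    intro x y w
    rw [Cfun_symm f x w, Cfun_symm f y w, Cfun_symm f (x+y) w]
  simp only [step]
  have h1 : ∀ x : Fin n → ZMod 2,
      (∑ y : Fin n → ZMod 2, ∑ w : Fin n → ZMod 2,
          Cfun f w x * Cfun f w y * Cfun f w (x + y))
        = ∑ w : Fin n → ZMod 2, ∑ y : Fin n → ZMod 2,
          Cfun f w x * Cfun f w y * Cfun f w (x + y) := fun x => Finset.sum_comm
  simp only [h1]
  rw [Finset.sum_comm]




theorem weak_linearity_lower_bound {n : ℕ} (f : (Fin n → ZMod 2) → ℝ)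
    (hf : ∀ x, f x = 1 ∨ f x = -1) (ε : ℝ) (hε : 0 < ε)
    (h : ε ≤ gowersNorm 3 f) :
    ε ^ 24 ≤
      (∑ x : Fin n → ZMod 2, ∑ y : Fin n → ZMod 2, ∑ α : Fin n → ZMod 2, ∑ β : Fin n → ZMod 2,
        fCoeff (dderiv f x) α ^ 2 * fCoeff (dderiv f y) β ^ 2 *
          fCoeff (dderiv f (x + y)) (α + β) ^ 2) / ((2 : ℝ) ^ n) ^ 2 := by
  set N : ℝ := (2:ℝ)^n with hNdef
  have hN : (0:ℝ) < N := by positivity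
  set gp : ℝ := gowersPow 3 f with hgpdef
  -- identity: sum of 4th powers = N * gp
  have hgp_id : ∑ y : Fin n → ZMod 2, ∑ α : Fin n → ZMod 2, fCoeff (dderiv f y) α ^ 4
      = N * gp := by
    simp only [sum_pow4]
    rw [← Finset.sum_div, sum_Cfun_sq, hgpdef, gowersPow]
    field_simp
    ring
  -- R = sum of 6th powers
  set S : ℝ := ∑ y : Fin n → ZMod 2, ∑ w1 : Fin n → ZMod 2, ∑ w2 : Fin n → ZMod 2,
      Cfun f y w1 * Cfun f y w2 * Cfun f y (w1 + w2) with hSdef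
  have hR_id : ∑ y : Fin n → ZMod 2, ∑ α : Fin n → ZMod 2, fCoeff (dderiv f y) α ^ 6
      = S / N^5 := by
    simp only [sum_pow6]
    rw [← Finset.sum_div]
  -- the goal quantity equals (S/N^5)/N
  have hQ : (∑ x : Fin n → ZMod 2, ∑ y : Fin n → ZMod 2, ∑ α : Fin n → ZMod 2,
        ∑ β : Fin n → ZMod 2,
        fCoeff (dderiv f x) α ^ 2 * fCoeff (dderiv f y) β ^ 2 *
          fCoeff (dderiv f (x + y)) (α + β) ^ 2) / N ^ 2
      = (S / N^5) / N := by
    rw [T_eq, swap_S, ← hSdef]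
    rw [div_div, div_div]
    congr 1
    ring
  rw [hQ, ← hR_id]
  -- Cauchy–Schwarz per y : (∑ μ^4)^2 ≤ ∑ μ^6
  have hCS : ∀ y : Fin n → ZMod 2,
      (∑ α : Fin n → ZMod 2, fCoeff (dderiv f y) α ^ 4) ^ 2
        ≤ ∑ α : Fin n → ZMod 2, fCoeff (dderiv f y) α ^ 6 := by
    intro y
    have := Finset.sum_mul_sq_le_sq_mul_sq Finset.univ
      (fun α => fCoeff (dderiv f y) α) (fun α => fCoeff (dderiv f y) α ^ 3)
    have e1 : (∑ α : Fin n → ZMod 2, fCoeff (dderiv f y) α * fCoeff (dderiv f y) α ^ 3)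
        = ∑ α : Fin n → ZMod 2, fCoeff (dderiv f y) α ^ 4 :=
      Finset.sum_congr rfl fun α _ => by ring
    have e2 : (∑ α : Fin n → ZMod 2, (fCoeff (dderiv f y) α ^ 3) ^ 2)
        = ∑ α : Fin n → ZMod 2, fCoeff (dderiv f y) α ^ 6 :=
      Finset.sum_congr rfl fun α _ => by ring
    calc (∑ α : Fin n → ZMod 2, fCoeff (dderiv f y) α ^ 4) ^ 2
        ≤ (∑ α : Fin n → ZMod 2, fCoeff (dderiv f y) α ^ 2) *
            ∑ α : Fin n → ZMod 2, fCoeff (dderiv f y) α ^ 6 := by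
          rw [← e1, ← e2]; simpa using this
      _ = ∑ α : Fin n → ZMod 2, fCoeff (dderiv f y) α ^ 6 := by
          rw [parseval_one f hf y, one_mul]
  -- Chebyshev over y
  have hcard : ((Finset.univ : Finset (Fin n → ZMod 2)).card : ℝ) = N := by
    rw [Finset.card_univ]
    simp [hNdef, Fintype.card_fun]
  have hcheb : (N * gp) ^ 2 ≤ N * ∑ y : Fin n → ZMod 2,
      ∑ α : Fin n → ZMod 2, fCoeff (dderiv f y) α ^ 6 := by
    rw [← hgp_id]
    calc (∑ y : Fin n → ZMod 2, ∑ α : Fin n → ZMod 2, fCoeff (dderiv f y) α ^ 4) ^ 2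
        ≤ ((Finset.univ : Finset (Fin n → ZMod 2)).card : ℝ) *
            ∑ y : Fin n → ZMod 2,
              (∑ α : Fin n → ZMod 2, fCoeff (dderiv f y) α ^ 4) ^ 2 :=
          sq_sum_le_card_mul_sum_sq
      _ ≤ N * ∑ y : Fin n → ZMod 2, ∑ α : Fin n → ZMod 2, fCoeff (dderiv f y) α ^ 6 := by
          rw [hcard]
          exact mul_le_mul_of_nonneg_left (Finset.sum_le_sum fun y _ => hCS y) hN.le
  -- gp bounds
  have hgp0 : 0 ≤ gp := by
    have hs4 : 0 ≤ ∑ y : Fin n → ZMod 2, ∑ α : Fin n → ZMod 2, fCoeff (dderiv f y) α ^ 4 :=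
      Finset.sum_nonneg fun y _ => Finset.sum_nonneg fun α _ => by positivity
    nlinarith [hgp_id]
  have hgp1 : gp ≤ 1 := by
    have hb : ∀ y : Fin n → ZMod 2,
        ∑ α : Fin n → ZMod 2, fCoeff (dderiv f y) α ^ 4 ≤ 1 := by
      intro y
      have hnn : ∀ α ∈ (Finset.univ : Finset (Fin n → ZMod 2)),
          0 ≤ fCoeff (dderiv f y) α ^ 2 := fun α _ => sq_nonneg _
      have := Finset.sum_sq_le_sq_sum_of_nonneg hnn
      have e3 : (∑ α : Fin n → ZMod 2, (fCoeff (dderiv f y) α ^ 2) ^ 2)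
          = ∑ α : Fin n → ZMod 2, fCoeff (dderiv f y) α ^ 4 :=
        Finset.sum_congr rfl fun α _ => by ring
      rw [e3, parseval_one f hf y] at this
      simpa using this
    have : ∑ y : Fin n → ZMod 2, ∑ α : Fin n → ZMod 2, fCoeff (dderiv f y) α ^ 4
        ≤ ∑ y : Fin n → ZMod 2, (1:ℝ) := Finset.sum_le_sum fun y _ => hb y
    rw [hgp_id, Finset.sum_const, nsmul_eq_mul, mul_one, hcard] at this
    exact le_of_mul_le_mul_left (by linarith) hN
  -- ε ≤ 1 and ε^8 ≤ gp
  have hnorm : gowersNorm 3 f = gp ^ ((1:ℝ)/8) := by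
    rw [gowersNorm, hgpdef]
    norm_num
  have hε8 : ε ^ 8 ≤ gp := by
    have h1 : ε ^ 8 ≤ (gp ^ ((1:ℝ)/8)) ^ 8 := by
      apply pow_le_pow_left₀ hε.le
      rw [← hnorm]; exact h
    have h2 : (gp ^ ((1:ℝ)/8)) ^ 8 = gp := by
      rw [← Real.rpow_natCast (gp ^ ((1:ℝ)/8)) 8, ← Real.rpow_mul hgp0]
      norm_num
    rw [h2] at h1; exact h1
  have hε1 : ε ≤ 1 := by
    have : gowersNorm 3 f ≤ 1 := by
      rw [hnorm]
      exact Real.rpow_le_one hgp0 hgp1 (by norm_num)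
    linarith
  -- finish
  have hfinal : gp ^ 2 ≤ (∑ y : Fin n → ZMod 2,
      ∑ α : Fin n → ZMod 2, fCoeff (dderiv f y) α ^ 6) / N := by
    rw [le_div_iff₀ hN]
    nlinarith [hcheb]
  calc ε ^ 24 ≤ ε ^ 16 := pow_le_pow_of_le_one hε.le hε1 (by norm_num)
    _ = (ε ^ 8) ^ 2 := by ring
    _ ≤ gp ^ 2 := pow_le_pow_left₀ (by positivity) hε8 2
    _ ≤ _ := hfinal
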